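/- Let m, n ≥ 0 be integers with p = 2m+n ≥ 2, and let G be a finite simple graph such that every (m,n)-colored mixed graph with underlying graph G admits a homomorphism to some (m,n)-colored mixed graph on at most k vertices, where k ≥ 4. Then the acyclic chromatic number of G satisfies χ_a(G) ≤ k² + k^{2 + ⌈log_p log_p k⌉}. -/

import Mathlib

/-- The possible kinds of links from a vertex `u` to a vertex `v` in an
`(m,n)`-colored mixed graph: an arc `u → v` of one of `m` colors, an arc
`v → u` of one of `m` colors, or an (unoriented) edge of one of `n` colors. -/
inductive Link (m n : ℕ) : Type where
  | arcOut : Fin m → Link m n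
  | arcIn : Fin m → Link m n
  | edge : Fin n → Link m n

/-- The link as seen from the other endpoint. -/
def Link.flip {m n : ℕ} : Link m n → Link m n
  | .arcOut c => .arcIn c
  | .arcIn c => .arcOut c
  | .edge c => .edge c

/-- An `(m,n)`-colored mixed graph on vertex type `V`: between any two distinct
vertices there is at most one link (a colored arc in either direction or a
colored edge), and there are no loops. -/
structure CMGraph (m n : ℕ) (V : Type) where
  link : V → V → Option (Link m n)
  symm : ∀ u v, link v u = (link u v).map Link.flip
  loopless : ∀ v, link v v = none

/-- The underlying simple graph of an `(m,n)`-colored mixed graph. -/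
def CMGraph.underlying {m n : ℕ} {V : Type} (G : CMGraph m n V) : SimpleGraph V where
  Adj u v := (G.link u v).isSome
  symm := by
    constructor
    intro u v h
    rw [G.symm u v]
    rcases hx : G.link u v with _ | l
    · rw [hx] at h; simp at h
    · simp
  loopless := by
    constructor
    intro v h
    rw [G.loopless v] at h
    simp at h

/-- A homomorphism of `(m,n)`-colored mixed graphs: arcs map to arcs of the same
color and direction, edges map to edges of the same color. -/
def IsCMHom {m n : ℕ} {V W : Type} (G : CMGraph m n V) (H : CMGraph m n W)
    (f : V → W) : Prop :=
  ∀ u v l, G.link u v = some l → H.link (f u) (f v) = some l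

/-- `G` admits a homomorphism to some `(m,n)`-colored mixed graph on at most `k`
vertices, i.e. `χ_{(m,n)}(G) ≤ k`. -/
def CMChromAtMost {m n : ℕ} {V : Type} (G : CMGraph m n V) (k : ℕ) : Prop :=
  ∃ (W : Type) (inst : Fintype W) (H : CMGraph m n W) (f : V → W),
    @Fintype.card W inst ≤ k ∧ IsCMHom G H f

/-- Every `(m,n)`-colored mixed graph admitting a homomorphism from `G` has at
least `k` vertices, i.e. `χ_{(m,n)}(G) ≥ k`. -/
def CMChromAtLeast {m n : ℕ} {V : Type} (G : CMGraph m n V) (k : ℕ) : Prop :=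
  ∀ (W : Type) (inst : Fintype W) (H : CMGraph m n W) (f : V → W),
    IsCMHom G H f → k ≤ @Fintype.card W inst

/-- The acyclic chromatic number of `G` is at most `k`: there is a proper
`k`-coloring in which the union of any two color classes induces a forest. -/
def AcycChromAtMost {V : Type} (G : SimpleGraph V) (k : ℕ) : Prop :=
  ∃ c : V → Fin k, (∀ u v, G.Adj u v → c u ≠ c v) ∧
    ∀ i j : Fin k, (G.induce {v | c v = i ∨ c v = j}).IsAcyclic

/-- The edge set of `G` can be decomposed into `r` forests. -/
def ArbAtMost {V : Type} (G : SimpleGraph V) (r : ℕ) : Prop :=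
  ∃ F : Fin r → SimpleGraph V,
    (∀ i, F i ≤ G) ∧
    (∀ i, (F i).IsAcyclic) ∧
    (∀ u v, G.Adj u v → ∃ i, (F i).Adj u v) ∧
    (∀ i j, i ≠ j → ∀ u v, ¬ ((F i).Adj u v ∧ (F j).Adj u v))

/-- Every vertex of `G` has degree at most `d`. -/
def MaxDegAtMost {V : Type} (G : SimpleGraph V) (d : ℕ) : Prop :=
  ∀ v, (G.neighborSet v).ncard ≤ d

/-- `G` is `d`-degenerate: every nonempty (induced) subgraph has a vertex of
degree at most `d` in it. -/
def DegenAtMost {V : Type} (G : SimpleGraph V) (d : ℕ) : Prop :=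
  ∀ s : Set V, s.Nonempty → ∃ v ∈ s, (G.neighborSet v ∩ s).ncard ≤ d


/-- The acyclic chromatic number of `G`. -/
noncomputable def acycChrom {V : Type} (G : SimpleGraph V) : ℕ :=
  sInf {k | AcycChromAtMost G k}

/- ========================= Auxiliary development ========================= -/

attribute [local instance] Classical.propDecidable

namespace AcycAux

/-! ### Coding links by elements of `Fin (2*m+n)` -/

def linkOf (m n : ℕ) (d : Fin (2*m+n)) : Link m n :=
  if h : (d : ℕ) < m then .arcOut ⟨d, h⟩
  else if h2 : (d : ℕ) < m + m then .arcIn ⟨(d : ℕ) - m, by omega⟩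
  else .edge ⟨(d : ℕ) - (m + m), by have := d.isLt; omega⟩

def unLink (m n : ℕ) : Link m n → Fin (2*m+n)
  | .arcOut c => ⟨c, by have := c.isLt; omega⟩
  | .arcIn c => ⟨m + c, by have := c.isLt; omega⟩
  | .edge c => ⟨m + m + c, by have := c.isLt; omega⟩

lemma unLink_linkOf {m n : ℕ} (d : Fin (2*m+n)) : unLink m n (linkOf m n d) = d := by
  apply Fin.ext
  unfold linkOf
  split_ifs with h1 h2 <;> simp [unLink] <;> omega

lemma linkOf_unLink {m n : ℕ} (l : Link m n) : linkOf m n (unLink m n l) = l := by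
  cases l with
  | arcOut c =>
    have := c.isLt
    dsimp only [unLink, linkOf]
    split_ifs with h1 h2
    · rfl
  | arcIn c =>
    have := c.isLt
    dsimp only [unLink, linkOf]
    split_ifs with h1 h2
    · omega
    · congr 1
      exact Fin.ext (by simp)
    · omega
  | edge c =>
    have := c.isLt
    dsimp only [unLink, linkOf]
    split_ifs with h1 h2
    · omega
    · omega
    · congr 1
      exact Fin.ext (by simp)

lemma linkOf_injective {m n : ℕ} : Function.Injective (linkOf m n) := by
  intro a b hab
  have : unLink m n (linkOf m n a) = unLink m n (linkOf m n b) := by rw [hab]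
  rwa [unLink_linkOf, unLink_linkOf] at this

lemma unLink_injective {m n : ℕ} : Function.Injective (unLink m n) := by
  intro a b hab
  have : linkOf m n (unLink m n a) = linkOf m n (unLink m n b) := by rw [hab]
  rwa [linkOf_unLink, linkOf_unLink] at this

lemma flip_flip {m n : ℕ} (l : Link m n) : l.flip.flip = l := by
  cases l <;> rfl

lemma flip_injective {m n : ℕ} : Function.Injective (Link.flip (m := m) (n := n)) := by
  intro a b hab
  have : a.flip.flip = b.flip.flip := by rw [hab]
  rwa [flip_flip, flip_flip] at this

/-! ### Building a colored mixed graph from a digit assignment -/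

noncomputable def mkCM {m n : ℕ} {V : Type} (G : SimpleGraph V) (pos : V → ℕ)
    (hpos : ∀ u v, G.Adj u v → pos u ≠ pos v) (w : V → V → Fin (2*m+n)) :
    CMGraph m n V where
  link u v :=
    if G.Adj u v then
      (if pos u < pos v then some (linkOf m n (w u v))
       else some ((linkOf m n (w v u)).flip))
    else none
  symm := by
    intro u v
    by_cases h : G.Adj u v
    · have h' : G.Adj v u := h.symm
      have hne : pos u ≠ pos v := hpos u v h
      rcases lt_or_gt_of_ne hne with hlt | hgt
      · simp [h, h', hlt, not_lt.mpr hlt.le, flip_flip]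
      · simp [h, h', hgt, not_lt.mpr hgt.le, flip_flip]
    · have h' : ¬ G.Adj v u := fun hc => h hc.symm
      simp [h, h']
  loopless := by
    intro v
    simp

lemma mkCM_underlying {m n : ℕ} {V : Type} (G : SimpleGraph V) (pos : V → ℕ)
    (hpos : ∀ u v, G.Adj u v → pos u ≠ pos v) (w : V → V → Fin (2*m+n)) :
    (mkCM G pos hpos w).underlying = G := by
  ext u v
  show ((mkCM G pos hpos w).link u v).isSome ↔ G.Adj u v
  by_cases h : G.Adj u v
  · by_cases hlt : pos u < pos v <;> simp [mkCM, h, hlt]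
  · simp [mkCM, h]

lemma mkCM_link_of_lt {m n : ℕ} {V : Type} {G : SimpleGraph V} {pos : V → ℕ}
    {hpos : ∀ u v, G.Adj u v → pos u ≠ pos v} {w : V → V → Fin (2*m+n)}
    {u v : V} (h : G.Adj u v) (hlt : pos u < pos v) :
    (mkCM G pos hpos w).link u v = some (linkOf m n (w u v)) := by
  simp [mkCM, h, hlt]

lemma mkCM_link_isSome {m n : ℕ} {V : Type} {G : SimpleGraph V} {pos : V → ℕ}
    {hpos : ∀ u v, G.Adj u v → pos u ≠ pos v} {w : V → V → Fin (2*m+n)}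
    {u v : V} (h : G.Adj u v) :
    ∃ l, (mkCM G pos hpos w).link u v = some l := by
  by_cases hlt : pos u < pos v <;> simp [mkCM, h, hlt]

/-! ### Extracting a coloring from the homomorphism hypothesis -/

lemma extract {m n k : ℕ} {V : Type} [Nonempty V] {M : CMGraph m n V}
    (h : CMChromAtMost M k) :
    ∃ (φ : V → Fin k) (Λ : Fin k → Fin k → Option (Link m n)),
      (∀ x, Λ x x = none) ∧ (∀ a b, Λ b a = (Λ a b).map Link.flip) ∧
      (∀ u v l, M.link u v = some l → Λ (φ u) (φ v) = some l) := by
  obtain ⟨W, inst, H, f, hcard, hhom⟩ := h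
  haveI : Nonempty W := ⟨f (Classical.arbitrary V)⟩
  let e := @Fintype.equivFin W inst
  let ι : W → Fin k := fun w => ⟨(e w : ℕ), lt_of_lt_of_le (e w).isLt hcard⟩
  have hι : Function.Injective ι := by
    intro a b hab
    apply e.injective
    apply Fin.ext
    simpa [ι, Fin.ext_iff] using hab
  let r : Fin k → W := Function.invFun ι
  have hr : ∀ w, r (ι w) = w := Function.leftInverse_invFun hι
  refine ⟨fun v => ι (f v), fun a b => H.link (r a) (r b),
    fun x => H.loopless _, fun a b => H.symm _ _, fun u v l hl => ?_⟩
  show H.link (r (ι (f u))) (r (ι (f v))) = some l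
  rw [hr, hr]
  exact hhom u v l hl

end AcycAux

namespace AcycAux

open SimpleGraph

lemma path_loop_length_zero {α : Type} {H : SimpleGraph α} {a : α} {p : H.Walk a a}
    (hp : p.IsPath) : p.length = 0 := by
  cases p with
  | nil => rfl
  | cons hadj q =>
    rw [Walk.isPath_def, Walk.support_cons] at hp
    exact absurd q.end_mem_support (List.nodup_cons.mp hp).1

lemma acyclic_of_unique_up {α : Type} (H : SimpleGraph α) (ρ : α → ℕ)
    (hρ : Function.Injective ρ)
    (huniq : ∀ v w₁ w₂, H.Adj v w₁ → H.Adj v w₂ → ρ v < ρ w₁ → ρ v < ρ w₂ → w₁ = w₂) :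
    H.IsAcyclic := by
  classical
  intro v w hw
  obtain ⟨u, hu, hmin⟩ := Finset.exists_min_image w.support.toFinset ρ
    ⟨v, List.mem_toFinset.mpr w.start_mem_support⟩
  rw [List.mem_toFinset] at hu
  have hmin' : ∀ x ∈ w.support, ρ u ≤ ρ x := fun x hx =>
    hmin x (List.mem_toFinset.mpr hx)
  have hc : (w.rotate u hu).IsCycle := hw.rotate hu
  have hsup : ∀ x ∈ (w.rotate u hu).support, ρ u ≤ ρ x := by
    intro x hx
    rw [Walk.support_eq_cons] at hx
    rcases List.mem_cons.mp hx with hx | hx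
    · exact hx ▸ le_rfl
    · exact hmin' x (List.mem_of_mem_tail
        (((Walk.support_rotate w u hu).mem_iff).mp hx))
  generalize (w.rotate u hu) = w' at hc hsup
  cases w' with
  | nil => exact hc.not_nil (by simp)
  | cons hadj p =>
    rename_i x
    -- hadj : H.Adj u x, p : H.Walk x u
    have hpath : p.IsPath := by
      rw [Walk.isPath_def]
      have h2 := hc.support_nodup
      rwa [Walk.support_cons, List.tail_cons] at h2
    have hxu : x ≠ u := by
      rintro rfl
      have h0 : p.length = 0 := path_loop_length_zero hpath
      have h3 := hc.three_le_length
      rw [Walk.length_cons, h0] at h3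
      omega
    -- decompose the reverse of p
    have hpr : p.reverse.IsPath := hpath.reverse
    obtain ⟨y, hady, q, hq⟩ := Walk.exists_eq_cons_of_ne (Ne.symm hxu) p.reverse
    have hyx : y ≠ x := by
      rintro rfl
      have hqp : q.IsPath := by
        rw [hq] at hpr
        exact hpr.of_cons
      have h0 : q.length = 0 := path_loop_length_zero hqp
      have h3 := hc.three_le_length
      have hlen : p.reverse.length = q.length + 1 := by rw [hq, Walk.length_cons]
      rw [Walk.length_reverse] at hlen
      rw [Walk.length_cons, hlen, h0] at h3
      omega
    -- memberships
    have hxs : x ∈ (Walk.cons hadj p).support := by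
      rw [Walk.support_cons]
      exact List.mem_cons_of_mem _ p.start_mem_support
    have hys : y ∈ (Walk.cons hadj p).support := by
      rw [Walk.support_cons]
      apply List.mem_cons_of_mem
      have : y ∈ p.reverse.support := by
        rw [hq, Walk.support_cons]
        exact List.mem_cons_of_mem _ q.start_mem_support
      rwa [Walk.support_reverse, List.mem_reverse] at this
    have hadjy : H.Adj u y := hady
    have hux : ρ u < ρ x :=
      lt_of_le_of_ne (hsup x hxs) (fun hh => (hadj.ne (hρ hh)).elim)
    have huy : ρ u < ρ y :=
      lt_of_le_of_ne (hsup y hys) (fun hh => (hadjy.ne (hρ hh)).elim)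
    exact hyx (huniq u y x hadjy hadj huy hux)

end AcycAux

namespace AcycAux

set_option maxHeartbeats 2000000 in
lemma counting {m n k : ℕ} {V : Type} [Fintype V] [Nonempty V] {G : SimpleGraph V}
    (h : ∀ M : CMGraph m n V, M.underlying = G → CMChromAtMost M k)
    (hzero : 0 < 2*m+n)
    (pos : V → ℕ) (hposinj : Function.Injective pos)
    (s : Finset V) :
    (2*m+n) ^ ((s ×ˢ s).filter (fun q : V × V => G.Adj q.1 q.2 ∧ pos q.1 < pos q.2)).card
      ≤ (2*m+n) ^ (Fintype.card {q : Fin k × Fin k // q.1 < q.2}) * k ^ s.card := by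
  classical
  set ES : Finset (V × V) :=
    (s ×ˢ s).filter (fun q : V × V => G.Adj q.1 q.2 ∧ pos q.1 < pos q.2) with hESdef
  have hposadj : ∀ u v, G.Adj u v → pos u ≠ pos v := fun u v ha he => ha.ne (hposinj he)
  have hfam : ∀ lam : (↥ES → Fin (2*m+n)),
      ∃ (φ : V → Fin k) (Λ : Fin k → Fin k → Option (Link m n)),
        (∀ x, Λ x x = none) ∧ (∀ a b, Λ b a = (Λ a b).map Link.flip) ∧
        (∀ u v (hq : (u,v) ∈ ES), Λ (φ u) (φ v) = some (linkOf m n (lam ⟨(u,v), hq⟩))) := by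
    intro lam
    set wf : V → V → Fin (2*m+n) := fun u v =>
      if hq : (u,v) ∈ ES then lam ⟨(u,v), hq⟩ else ⟨0, hzero⟩ with hwf
    obtain ⟨φ, Λ, h1, h2, h3⟩ :=
      extract (h (mkCM G pos hposadj wf) (mkCM_underlying _ _ _ _))
    refine ⟨φ, Λ, h1, h2, ?_⟩
    intro u v hq
    have hmm := Finset.mem_filter.mp hq
    have hlink : (mkCM G pos hposadj wf).link u v = some (linkOf m n (wf u v)) :=
      mkCM_link_of_lt hmm.2.1 hmm.2.2
    have hwfuv : wf u v = lam ⟨(u,v), hq⟩ := dif_pos hq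
    rw [hwfuv] at hlink
    exact h3 u v _ hlink
  choose φF ΛF hloop hsymm hhom using hfam
  let code : Option (Link m n) → Fin (2*m+n) := fun o => o.elim ⟨0, hzero⟩ (unLink m n)
  let enc : (↥ES → Fin (2*m+n)) →
      ({q : Fin k × Fin k // q.1 < q.2} → Fin (2*m+n)) × (↥s → Fin k) := fun lam =>
    (fun q => code (ΛF lam q.1.1 q.1.2), fun x => φF lam x.1)
  have hencinj : Function.Injective enc := by
    intro l1 l2 he
    have hτ : (fun q : {q : Fin k × Fin k // q.1 < q.2} => code (ΛF l1 q.1.1 q.1.2))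
        = fun q => code (ΛF l2 q.1.1 q.1.2) := congrArg Prod.fst he
    have hφ : (fun x : ↥s => φF l1 x.1) = fun x => φF l2 x.1 := congrArg Prod.snd he
    funext x
    obtain ⟨⟨u, v⟩, hq⟩ := x
    have hmm := Finset.mem_filter.mp hq
    have hus : u ∈ s := (Finset.mem_product.mp hmm.1).1
    have hvs : v ∈ s := (Finset.mem_product.mp hmm.1).2
    have hφu : φF l1 u = φF l2 u := congrFun hφ ⟨u, hus⟩
    have hφv : φF l1 v = φF l2 v := congrFun hφ ⟨v, hvs⟩
    have e1 := hhom l1 u v hq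
    have e2 := hhom l2 u v hq
    rw [← hφu, ← hφv] at e2
    set a := φF l1 u with ha
    set b := φF l1 v with hb
    have hab : a ≠ b := by
      intro hh
      rw [hh, hloop l1 b] at e1
      exact absurd e1 (by simp)
    rcases lt_trichotomy a b with hlt | heq | hgt
    · have hcq := congrFun hτ ⟨(a, b), hlt⟩
      simp only [code] at hcq
      rw [e1, e2] at hcq
      simp only [Option.elim_some] at hcq
      rw [unLink_linkOf, unLink_linkOf] at hcq
      exact hcq
    · exact absurd heq hab
    · have f1 : ΛF l1 b a = some ((linkOf m n (l1 ⟨(u,v), hq⟩)).flip) := by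
        rw [hsymm l1 a b, e1]; rfl
      have f2 : ΛF l2 b a = some ((linkOf m n (l2 ⟨(u,v), hq⟩)).flip) := by
        rw [hsymm l2 a b, e2]; rfl
      have hcq := congrFun hτ ⟨(b, a), hgt⟩
      simp only [code] at hcq
      rw [f1, f2] at hcq
      simp only [Option.elim_some] at hcq
      exact linkOf_injective (flip_injective (unLink_injective hcq))
  have hcard := Fintype.card_le_of_injective enc hencinj
  simpa [Fintype.card_fun, Fintype.card_prod, Fintype.card_coe, Fintype.card_fin]
    using hcard

end AcycAux

namespace AcycAux

lemma handshake {V : Type} [Fintype V] (G : SimpleGraph V) (pos : V → ℕ)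
    (hposadj : ∀ u v, G.Adj u v → pos u ≠ pos v) (s : Finset V) :
    ∑ v ∈ s, (s.filter (G.Adj v)).card
      = 2 * ((s ×ˢ s).filter (fun q : V × V => G.Adj q.1 q.2 ∧ pos q.1 < pos q.2)).card := by
  classical
  set P := (s ×ˢ s).filter (fun q : V × V => G.Adj q.1 q.2) with hP
  set Elt := (s ×ˢ s).filter (fun q : V × V => G.Adj q.1 q.2 ∧ pos q.1 < pos q.2) with hE1
  set Egt := (s ×ˢ s).filter (fun q : V × V => G.Adj q.1 q.2 ∧ pos q.2 < pos q.1) with hE2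
  have h1 : P.card = ∑ v ∈ s, (s.filter (G.Adj v)).card := by
    rw [Finset.card_eq_sum_card_fiberwise (f := Prod.fst) (s := P) (t := s)
      (fun q hq => (Finset.mem_product.mp (Finset.mem_filter.mp hq).1).1)]
    apply Finset.sum_congr rfl
    intro v hv
    apply Finset.card_bij' (fun q (_ : q ∈ P.filter (fun a => a.1 = v)) => q.2)
      (fun w (_ : w ∈ s.filter (G.Adj v)) => (v, w))
    · intro q hq
      have hh := Finset.mem_filter.mp hq
      have h2 := Finset.mem_filter.mp hh.1
      refine Finset.mem_filter.mpr ⟨(Finset.mem_product.mp h2.1).2, ?_⟩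
      rw [← hh.2]; exact h2.2
    · intro w hw
      have hh := Finset.mem_filter.mp hw
      exact Finset.mem_filter.mpr
        ⟨Finset.mem_filter.mpr ⟨Finset.mem_product.mpr ⟨hv, hh.1⟩, hh.2⟩, rfl⟩
    · intro q hq
      have hh := Finset.mem_filter.mp hq
      exact Prod.ext hh.2.symm rfl
    · intro w hw; rfl
  have hsplit : P = Elt ∪ Egt := by
    ext q
    simp only [hP, hE1, hE2, Finset.mem_union, Finset.mem_filter]
    constructor
    · rintro ⟨hm, hadj⟩
      rcases lt_or_gt_of_ne (hposadj _ _ hadj) with hlt | hgt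
      · exact Or.inl ⟨hm, hadj, hlt⟩
      · exact Or.inr ⟨hm, hadj, hgt⟩
    · rintro (⟨hm, hadj, _⟩ | ⟨hm, hadj, _⟩) <;> exact ⟨hm, hadj⟩
  have hdisj : Disjoint Elt Egt := by
    rw [Finset.disjoint_left]
    intro q hq1 hq2
    have g1 := (Finset.mem_filter.mp hq1).2.2
    have g2 := (Finset.mem_filter.mp hq2).2.2
    omega
  have hswap : Egt.card = Elt.card := by
    apply Finset.card_bij' (fun q (_ : q ∈ Egt) => (q.2, q.1)) (fun q (_ : q ∈ Elt) => (q.2, q.1))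
    · intro q hq
      have hh := Finset.mem_filter.mp hq
      have hm := Finset.mem_product.mp hh.1
      exact Finset.mem_filter.mpr ⟨Finset.mem_product.mpr ⟨hm.2, hm.1⟩, hh.2.1.symm, hh.2.2⟩
    · intro q hq
      have hh := Finset.mem_filter.mp hq
      have hm := Finset.mem_product.mp hh.1
      exact Finset.mem_filter.mpr ⟨Finset.mem_product.mpr ⟨hm.2, hm.1⟩, hh.2.1.symm, hh.2.2⟩
    · intro q hq; rfl
    · intro q hq; rfl
  rw [← h1, hsplit, Finset.card_union_of_disjoint hdisj, hswap]
  omega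

lemma two_mul_cardUT (k : ℕ) :
    2 * Fintype.card {q : Fin k × Fin k // q.1 < q.2} = k*k - k := by
  classical
  rw [Fintype.card_subtype]
  set Elt := Finset.univ.filter (fun q : Fin k × Fin k => q.1 < q.2) with hE1
  set Egt := Finset.univ.filter (fun q : Fin k × Fin k => q.2 < q.1) with hE2
  have hswap : Egt.card = Elt.card := by
    apply Finset.card_bij' (fun q (_ : q ∈ Egt) => (q.2, q.1)) (fun q (_ : q ∈ Elt) => (q.2, q.1))
    · intro q hq
      have hh := Finset.mem_filter.mp hq
      exact Finset.mem_filter.mpr ⟨Finset.mem_univ _, hh.2⟩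
    · intro q hq
      have hh := Finset.mem_filter.mp hq
      exact Finset.mem_filter.mpr ⟨Finset.mem_univ _, hh.2⟩
    · intro q hq; rfl
    · intro q hq; rfl
  have hdisj : Disjoint Elt Egt := by
    rw [Finset.disjoint_left]
    intro q hq1 hq2
    have g1 := (Finset.mem_filter.mp hq1).2
    have g2 := (Finset.mem_filter.mp hq2).2
    exact absurd g2 (asymm g1)
  have hsplit : (Finset.univ : Finset (Fin k)).offDiag = Elt ∪ Egt := by
    ext q
    simp only [Finset.mem_offDiag, Finset.mem_union, hE1, hE2, Finset.mem_filter,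
      Finset.mem_univ, true_and]
    exact ne_iff_lt_or_gt
  have hcard := Finset.offDiag_card (Finset.univ : Finset (Fin k))
  rw [hsplit, Finset.card_union_of_disjoint hdisj, hswap] at hcard
  simp only [Finset.card_univ, Fintype.card_fin] at hcard
  omega

lemma degeneracy {m n k : ℕ} {V : Type} [Fintype V] [Nonempty V] {G : SimpleGraph V}
    (hp : 2 ≤ 2*m+n) (hk : 4 ≤ k)
    (h : ∀ M : CMGraph m n V, M.underlying = G → CMChromAtMost M k)
    (D : ℕ) (hD : 2 * Real.logb ((2*m+n : ℕ) : ℝ) (k : ℝ) ≤ (D : ℝ))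
    (s : Finset V) (hs : k*k + 1 ≤ s.card) :
    ∃ v ∈ s, (s.filter (G.Adj v)).card ≤ D := by
  classical
  by_contra hcon
  push_neg at hcon
  let pos : V → ℕ := fun v => ((Fintype.equivFin V) v : ℕ)
  have hposinj : Function.Injective pos := fun a b hab =>
    (Fintype.equivFin V).injective (Fin.ext hab)
  have hposadj : ∀ u v, G.Adj u v → pos u ≠ pos v := fun u v ha he => ha.ne (hposinj he)
  set ES := (s ×ˢ s).filter (fun q : V × V => G.Adj q.1 q.2 ∧ pos q.1 < pos q.2) with hES
  set CUT := Fintype.card {q : Fin k × Fin k // q.1 < q.2} with hCUT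
  have hcount : (2*m+n) ^ ES.card ≤ (2*m+n) ^ CUT * k ^ s.card :=
    counting h (by omega) pos hposinj s
  have hhs : ∑ v ∈ s, (s.filter (G.Adj v)).card = 2 * ES.card := handshake G pos hposadj s
  have hUT : 2 * CUT = k*k - k := two_mul_cardUT k
  have hsum : (D+1) * s.card ≤ 2 * ES.card := by
    rw [← hhs]
    calc (D+1) * s.card = s.card • (D+1) := by rw [smul_eq_mul]; ring
    _ ≤ ∑ v ∈ s, (s.filter (G.Adj v)).card :=
        Finset.card_nsmul_le_sum s _ _ (fun v hv => hcon v hv)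
  set p' : ℝ := ((2*m+n : ℕ) : ℝ) with hp'
  have hp1 : (1:ℝ) < p' := by
    rw [hp']; exact_mod_cast (by omega : 1 < 2*m+n)
  have hkey : (ES.card : ℝ) ≤ CUT + (s.card : ℝ) * Real.logb p' k := by
    have hc' : p' ^ ES.card ≤ p' ^ CUT * (k:ℝ) ^ s.card := by
      have : ((2*m+n : ℕ):ℝ) ^ ES.card ≤ ((2*m+n : ℕ):ℝ) ^ CUT * (k:ℝ) ^ s.card := by
        exact_mod_cast hcount
      rwa [← hp'] at this
    have hl := Real.logb_le_logb_of_le hp1 (pow_pos (by linarith) _) hc'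
    rw [Real.logb_pow, Real.logb_mul (by positivity)
        (pow_ne_zero _ (by norm_num; omega : (k:ℝ) ≠ 0)),
      Real.logb_pow, Real.logb_pow, Real.logb_self_eq_one hp1] at hl
    linarith [hl]
  have hA : ((k*k : ℕ) : ℝ) + 1 ≤ (s.card : ℝ) := by exact_mod_cast hs
  have hsumR : ((D:ℝ)+1) * (s.card : ℝ) ≤ 2 * (ES.card : ℝ) := by exact_mod_cast hsum
  have hkk : k ≤ k*k := Nat.le_mul_of_pos_left k (by omega)
  have hUTR : 2 * (CUT:ℝ) = (k:ℝ)*(k:ℝ) - (k:ℝ) := by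
    have hcast := congrArg (fun x : ℕ => (x : ℝ)) hUT
    rw [Nat.cast_sub hkk] at hcast
    push_cast at hcast
    linarith [hcast]
  have hA0 : (0:ℝ) ≤ (s.card : ℝ) := Nat.cast_nonneg _
  have h5 : (s.card:ℝ) * (2 * Real.logb p' k) ≤ (s.card:ℝ) * D :=
    mul_le_mul_of_nonneg_left hD hA0
  have hk0 : (0:ℝ) ≤ (k:ℝ) := Nat.cast_nonneg _
  push_cast at hA
  nlinarith [hkey, hsumR, hUTR, h5, hA, hk0]

end AcycAux

namespace AcycAux

lemma peel {V : Type} [Fintype V] (G : SimpleGraph V) (D c : ℕ)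
    (hdeg : ∀ s : Finset V, c + 1 ≤ s.card → ∃ v ∈ s, (s.filter (G.Adj v)).card ≤ D) :
    ∀ s : Finset V, ∃ L : List V, L.Nodup ∧ L.toFinset = s ∧
      ∀ (pref suf : List V) (v : V), L = pref ++ v :: suf →
        c + 1 ≤ (v :: suf).length → (suf.toFinset.filter (G.Adj v)).card ≤ D := by
  classical
  intro s
  induction s using Finset.strongInduction with
  | _ s ih =>
    by_cases hsmall : s.card < c + 1
    · refine ⟨s.toList, Finset.nodup_toList s, Finset.toList_toFinset s, ?_⟩
      intro pref suf v hdec hlen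
      exfalso
      have hL : s.toList.length = s.card := Finset.length_toList s
      rw [hdec, List.length_append, List.length_cons] at hL
      rw [List.length_cons] at hlen
      omega
    · push_neg at hsmall
      obtain ⟨v, hv, hdv⟩ := hdeg s hsmall
      obtain ⟨L', hnd, htf, hQ⟩ := ih (s.erase v) (Finset.erase_ssubset hv)
      refine ⟨v :: L', ?_, ?_, ?_⟩
      · rw [List.nodup_cons]
        refine ⟨?_, hnd⟩
        rw [← List.mem_toFinset, htf]
        exact Finset.notMem_erase v s
      · rw [List.toFinset_cons, htf, Finset.insert_erase hv]
      · intro pref suf w hdec hlen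
        cases pref with
        | nil =>
          simp only [List.nil_append] at hdec
          injection hdec with h1 h2
          subst h1
          subst h2
          rw [htf]
          exact le_trans
            (Finset.card_le_card
              (Finset.filter_subset_filter _ (Finset.erase_subset v s))) hdv
        | cons a pref' =>
          simp only [List.cons_append] at hdec
          injection hdec with h1 h2
          exact hQ pref' suf w h2 hlen

end AcycAux
/-- If every `(m,n)`-colored mixed graph with underlying graph `G`
admits a homomorphism to some `(m,n)`-colored mixed graph on at most `k` vertices
(`k ≥ 4`, `p = 2m+n ≥ 2`), then `χ_a(G) ≤ k² + k^(2 + ⌈log_p log_p k⌉)`. -/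
theorem acyclic_le_of_mixed_chromatic (m n k : ℕ)
    (hp : 2 ≤ 2 * m + n) (hk : 4 ≤ k)
    (V : Type) [Fintype V] (G : SimpleGraph V)
    (h : ∀ M : CMGraph m n V, M.underlying = G → CMChromAtMost M k) :
    (acycChrom G : ℝ) ≤
      (k : ℝ) ^ 2 +
        (k : ℝ) ^ ((2 + ⌈Real.logb (2 * m + n : ℝ) (Real.logb (2 * m + n : ℝ) (k : ℝ))⌉ : ℤ)) := by
  classical
  open AcycAux in
  set p : ℕ := 2*m+n with hpdef
  have hp1R : (1:ℝ) < (p:ℝ) := by exact_mod_cast (by omega : 1 < p)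
  have hp0R : (0:ℝ) < (p:ℝ) := by linarith
  set t : ℝ := Real.logb (p:ℝ) (k:ℝ) with htdef
  have ht0 : 0 < t := Real.logb_pos hp1R (by exact_mod_cast (by omega : 1 < k))
  set zc : ℤ := ⌈Real.logb (p:ℝ) t⌉ with hzcdef
  -- `zc ≥ 0`
  have hpk : (p:ℝ) < (4:ℝ) ^ (p:ℕ) := by
    exact_mod_cast (Nat.lt_pow_self (by norm_num : 1 < 4) : p < 4 ^ p)
  have hrp : (p:ℝ) ^ ((p:ℝ))⁻¹ < 4 := by
    have hinv : (0:ℝ) < ((p:ℝ))⁻¹ := by positivity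
    have h2 : ((4:ℝ) ^ (p:ℕ)) = (4:ℝ) ^ ((p:ℕ):ℝ) := (Real.rpow_natCast 4 p).symm
    have h3 : (p:ℝ) ^ ((p:ℝ))⁻¹ < ((4:ℝ) ^ ((p:ℕ):ℝ)) ^ ((p:ℝ))⁻¹ :=
      Real.rpow_lt_rpow (le_of_lt hp0R) (h2 ▸ hpk) hinv
    calc (p:ℝ) ^ ((p:ℝ))⁻¹ < ((4:ℝ) ^ ((p:ℕ):ℝ)) ^ ((p:ℝ))⁻¹ := h3
    _ = (4:ℝ) ^ (((p:ℕ):ℝ) * ((p:ℝ))⁻¹) := by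
        rw [← Real.rpow_mul (by norm_num)]
    _ = 4 := by
        rw [mul_inv_cancel₀ (by positivity : ((p:ℕ):ℝ) ≠ 0), Real.rpow_one]
  have hlt : ((-1 : ℤ) : ℝ) < Real.logb (p:ℝ) t := by
    push_cast
    rw [Real.lt_logb_iff_rpow_lt hp1R ht0, Real.rpow_neg_one, htdef,
      Real.lt_logb_iff_rpow_lt hp1R (by positivity : (0:ℝ) < (k:ℝ))]
    calc (p:ℝ) ^ ((p:ℝ))⁻¹ < 4 := hrp
    _ ≤ (k:ℝ) := by exact_mod_cast hk
  have hzc0 : 0 ≤ zc := by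
    have := Int.lt_ceil.mpr hlt
    omega
  set cc : ℕ := zc.toNat with hccdef
  have hccR : ((cc:ℕ):ℝ) = (zc : ℝ) := by exact_mod_cast Int.toNat_of_nonneg hzc0
  set R : ℕ := 2 + cc with hRdef
  have hR2 : 2 ≤ R := by omega
  -- `2t ≤ p^R`
  have hpcc : t ≤ (p:ℝ) ^ cc := by
    rcases le_or_gt t 1 with h1 | h1
    · exact le_trans h1 (one_le_pow₀ (by linarith))
    · have hle : Real.logb (p:ℝ) t ≤ (zc : ℝ) := Int.le_ceil _
      have h2 : t = (p:ℝ) ^ Real.logb (p:ℝ) t :=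
        (Real.rpow_logb hp0R (by linarith) (by linarith)).symm
      calc t = (p:ℝ) ^ Real.logb (p:ℝ) t := h2
      _ ≤ (p:ℝ) ^ ((cc:ℕ):ℝ) := by
          apply (Real.rpow_le_rpow_left_iff hp1R).mpr
          rw [hccR]; exact hle
      _ = (p:ℝ) ^ cc := Real.rpow_natCast _ _
  have hD2t : 2 * t ≤ ((p ^ R : ℕ) : ℝ) := by
    have hDR : ((p ^ R : ℕ):ℝ) = ((p:ℝ))^2 * (p:ℝ)^cc := by
      rw [hRdef]; push_cast [pow_add]; ring
    have hp2R : (2:ℝ) ≤ (p:ℝ) := by exact_mod_cast (by omega : 2 ≤ p)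
    have h4 : (4:ℝ) ≤ (p:ℝ)^2 := by nlinarith
    have hccpos : (1:ℝ) ≤ (p:ℝ)^cc := one_le_pow₀ (by linarith)
    rcases le_or_gt t 1 with h1 | h1
    · nlinarith
    · nlinarith [hpcc]
  set K : ℕ := k*k + k ^ R with hKdef
  -- The acyclic coloring
  have hacy : AcycChromAtMost G K := by
    rcases isEmpty_or_nonempty V with hV | hV
    · refine ⟨fun v => (hV.elim v), fun u v hadj => (hV.elim u), ?_⟩
      intro i j x w hw
      exact (hV.elim x.1)
    · have hdeg : ∀ s : Finset V, k*k + 1 ≤ s.card →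
          ∃ v ∈ s, (s.filter (G.Adj v)).card ≤ p ^ R :=
        fun s hs => degeneracy hp hk h (p ^ R) hD2t s hs
      obtain ⟨L, hLnd, hLuniv, hLQ⟩ := peel G (p ^ R) (k*k) hdeg Finset.univ
      set N := L.length with hNdef
      have hmemL : ∀ v : V, v ∈ L := fun v => by
        rw [← List.mem_toFinset, hLuniv]; exact Finset.mem_univ v
      have hposlt : ∀ v : V, L.idxOf v < N := fun v =>
        List.idxOf_lt_length_iff.mpr (hmemL v)
      have hposinj : ∀ a b : V, L.idxOf a = L.idxOf b → a = b := by
        intro a b hab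
        have ha : L[L.idxOf a]'(hposlt a) = a := List.getElem_idxOf (hposlt a)
        have hb : L[L.idxOf b]'(hposlt b) = b := List.getElem_idxOf (hposlt b)
        rw [← ha, ← hb]
        congr 1
      have hposadj : ∀ u v, G.Adj u v → L.idxOf u ≠ L.idxOf v :=
        fun u v ha he => ha.ne (hposinj u v he)
      have hdropmem : ∀ v w : V, w ∈ L.drop (L.idxOf v + 1) ↔ L.idxOf v < L.idxOf w := by
        intro v w
        constructor
        · intro hw
          obtain ⟨i, hi, hig⟩ := List.mem_iff_getElem.mp hw
          rw [List.getElem_drop] at hig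
          have hb : L.idxOf v + 1 + i < L.length := by
            rw [List.length_drop] at hi; omega
          have hw2 : L[L.idxOf w]'(hposlt w) = w := List.getElem_idxOf (hposlt w)
          have heq : L.idxOf w = L.idxOf v + 1 + i :=
            (hLnd.getElem_inj_iff).mp (hw2.trans hig.symm)
          omega
        · intro hlt'
          have hwlt : L.idxOf w < L.length := hposlt w
          have hj : L.idxOf w - (L.idxOf v + 1) < (L.drop (L.idxOf v + 1)).length := by
            rw [List.length_drop]; omega
          have hgoal : (L.drop (L.idxOf v + 1))[L.idxOf w - (L.idxOf v + 1)]'hj = w := by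
            rw [List.getElem_drop]
            have harith : L.idxOf v + 1 + (L.idxOf w - (L.idxOf v + 1)) = L.idxOf w := by
              omega
            simp only [harith]
            exact List.getElem_idxOf (hposlt w)
          exact hgoal ▸ List.getElem_mem hj
      set Sv : V → Finset V :=
        fun v => Finset.univ.filter (fun w => G.Adj v w ∧ L.idxOf v < L.idxOf w) with hSvdef
      have hupdeg : ∀ v : V, L.idxOf v + (k*k) + 1 ≤ N → (Sv v).card ≤ p ^ R := by
        intro v hvA
        have hlt : L.idxOf v < L.length := hposlt v
        have hsplit : L = L.take (L.idxOf v) ++ v :: L.drop (L.idxOf v + 1) := by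
          conv_lhs => rw [← List.take_append_drop (L.idxOf v) L]
          rw [List.drop_eq_getElem_cons hlt, List.getElem_idxOf hlt]
        have hQ := hLQ _ _ v hsplit (by
          rw [List.length_cons, List.length_drop]; omega)
        have hset : Sv v = (L.drop (L.idxOf v + 1)).toFinset.filter (G.Adj v) := by
          ext w
          simp only [hSvdef, Finset.mem_filter, Finset.mem_univ, true_and, List.mem_toFinset]
          constructor
          · rintro ⟨hadj, hlt'⟩
            exact ⟨(hdropmem v w).mpr hlt', hadj⟩
          · rintro ⟨hmem, hadj⟩
            exact ⟨hadj, (hdropmem v w).mp hmem⟩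
        rw [hset]
        exact hQ
      have hDpos : 0 < p ^ R := by positivity
      have hemb : ∀ v : V, ∃ f : V → Fin (p ^ R),
          (Sv v).card ≤ p ^ R → ∀ w₁ ∈ Sv v, ∀ w₂ ∈ Sv v, f w₁ = f w₂ → w₁ = w₂ := by
        intro v
        by_cases hc : (Sv v).card ≤ p ^ R
        · obtain ⟨f⟩ := Function.Embedding.nonempty_of_card_le
            (α := {x // x ∈ Sv v}) (β := Fin (p ^ R))
            (by rw [Fintype.card_coe, Fintype.card_fin]; exact hc)
          refine ⟨fun w => if hw : w ∈ Sv v then f ⟨w, hw⟩ else ⟨0, hDpos⟩, ?_⟩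
          intro _ w₁ h1 w₂ h2 heq
          dsimp only at heq
          rw [dif_pos h1, dif_pos h2] at heq
          exact congrArg Subtype.val (f.injective heq)
        · exact ⟨fun _ => ⟨0, hDpos⟩, fun hcc => absurd hcc hc⟩
      choose idx hidx using hemb
      let dg : Fin (p ^ R) → (Fin R → Fin p) := fun i => finFunctionFinEquiv.symm i
      have hdginj : Function.Injective dg := fun a b hab =>
        finFunctionFinEquiv.symm.injective hab
      let wl : Fin R → V → V → Fin p := fun l u v => dg (idx u v) l
      let Ml : Fin R → CMGraph m n V := fun l => mkCM G (fun v => L.idxOf v) hposadj (wl l)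
      have hfam : ∀ l : Fin R, ∃ (φ : V → Fin k) (Λ : Fin k → Fin k → Option (Link m n)),
          (∀ x, Λ x x = none) ∧ (∀ a b, Λ b a = (Λ a b).map Link.flip) ∧
          (∀ u v l0, (Ml l).link u v = some l0 → Λ (φ u) (φ v) = some l0) :=
        fun l => extract (h (Ml l) (mkCM_underlying _ _ _ _))
      choose φ Λ hloop hsym hhom using hfam
      have hKcard : Fintype.card ((Fin (k*k)) ⊕ (Fin R → Fin k)) = K := by
        simp [Fintype.card_sum, Fintype.card_fun, hKdef]
      let eq1 : ((Fin (k*k)) ⊕ (Fin R → Fin k)) ≃ Fin K := Fintype.equivFinOfCardEq hKcard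
      let PL : V → (Fin (k*k)) ⊕ (Fin R → Fin k) := fun v =>
        if hB : N ≤ L.idxOf v + k*k then
          Sum.inl ⟨L.idxOf v - (N - k*k), by have := hposlt v; omega⟩
        else Sum.inr (fun l => φ l v)
      have hproperP : ∀ u v, G.Adj u v → PL u ≠ PL v := by
        intro u v hadj heq
        simp only [PL] at heq
        by_cases hBu : N ≤ L.idxOf u + k*k <;> by_cases hBv : N ≤ L.idxOf v + k*k
        · rw [dif_pos hBu, dif_pos hBv] at heq
          have h2 := Sum.inl_injective heq
          have h3 : L.idxOf u - (N - k*k) = L.idxOf v - (N - k*k) := congrArg Fin.val h2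
          have hu' := hposlt u
          have hv' := hposlt v
          have h4 : L.idxOf u = L.idxOf v := by omega
          exact hadj.ne (hposinj u v h4)
        · rw [dif_pos hBu, dif_neg hBv] at heq; exact absurd heq (by simp)
        · rw [dif_neg hBu, dif_pos hBv] at heq; exact absurd heq (by simp)
        · rw [dif_neg hBu, dif_neg hBv] at heq
          have hfeq := Sum.inr_injective heq
          have hl0 : φ ⟨0, by omega⟩ u = φ ⟨0, by omega⟩ v := congrFun hfeq _
          obtain ⟨l0, hl0link⟩ := mkCM_link_isSome (w := wl ⟨0, by omega⟩) hadj
          have hres := hhom ⟨0, by omega⟩ u v l0 hl0link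
          rw [hl0, hloop] at hres
          exact absurd hres (by simp)
      let col : V → Fin K := fun v => eq1 (PL v)
      refine ⟨col, fun u v ha he => hproperP u v ha (eq1.injective he), ?_⟩
      intro i j
      apply acyclic_of_unique_up _ (fun x => L.idxOf x.1)
      · intro a b hab
        exact Subtype.ext (hposinj _ _ hab)
      · intro x w₁ w₂ h1 h2 hlt1 hlt2
        have ha1 : G.Adj x.1 w₁.1 := h1
        have ha2 : G.Adj x.1 w₂.1 := h2
        have hcx := x.2
        have hcw1 := w₁.2
        have hcw2 := w₂.2
        simp only [Set.mem_setOf_eq] at hcx hcw1 hcw2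
        have hPx : PL x.1 = eq1.symm i ∨ PL x.1 = eq1.symm j := by
          rcases hcx with hh | hh
          · exact Or.inl ((Equiv.eq_symm_apply eq1).mpr hh)
          · exact Or.inr ((Equiv.eq_symm_apply eq1).mpr hh)
        have hPw1 : PL w₁.1 = eq1.symm i ∨ PL w₁.1 = eq1.symm j := by
          rcases hcw1 with hh | hh
          · exact Or.inl ((Equiv.eq_symm_apply eq1).mpr hh)
          · exact Or.inr ((Equiv.eq_symm_apply eq1).mpr hh)
        have hPw2 : PL w₂.1 = eq1.symm i ∨ PL w₂.1 = eq1.symm j := by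
          rcases hcw2 with hh | hh
          · exact Or.inl ((Equiv.eq_symm_apply eq1).mpr hh)
          · exact Or.inr ((Equiv.eq_symm_apply eq1).mpr hh)
        have hne1 : PL x.1 ≠ PL w₁.1 := hproperP _ _ ha1
        have hne2 : PL x.1 ≠ PL w₂.1 := hproperP _ _ ha2
        have h12 : PL w₁.1 = PL w₂.1 := by
          rcases hPx with hx | hx <;> rcases hPw1 with hw1 | hw1 <;> rcases hPw2 with hw2 | hw2 <;>
            first
            | exact hw1.trans hw2.symm
            | exact absurd (hx.trans hw1.symm) hne1
            | exact absurd (hx.trans hw2.symm) hne2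
        apply Subtype.ext
        cases hPw : PL w₁.1 with
        | inl b =>
          have hPw2' : PL w₂.1 = Sum.inl b := by rw [← h12]; exact hPw
          have hB1 : N ≤ L.idxOf w₁.1 + k*k := by
            by_contra hB
            simp only [PL] at hPw
            rw [dif_neg hB] at hPw
            exact absurd hPw (by simp)
          have hB2 : N ≤ L.idxOf w₂.1 + k*k := by
            by_contra hB
            simp only [PL] at hPw2'
            rw [dif_neg hB] at hPw2'
            exact absurd hPw2' (by simp)
          simp only [PL] at hPw hPw2'
          rw [dif_pos hB1] at hPw
          rw [dif_pos hB2] at hPw2'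
          have hval : L.idxOf w₁.1 - (N - k*k) = L.idxOf w₂.1 - (N - k*k) :=
            congrArg Fin.val (Sum.inl_injective (hPw.trans hPw2'.symm))
          have hb1 := hposlt w₁.1
          have hb2 := hposlt w₂.1
          exact hposinj _ _ (by omega)
        | inr F =>
          have hPw2' : PL w₂.1 = Sum.inr F := by rw [← h12]; exact hPw
          have hA1 : ¬ N ≤ L.idxOf w₁.1 + k*k := by
            intro hB
            simp only [PL] at hPw
            rw [dif_pos hB] at hPw
            exact absurd hPw (by simp)
          have hA2 : ¬ N ≤ L.idxOf w₂.1 + k*k := by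
            intro hB
            simp only [PL] at hPw2'
            rw [dif_pos hB] at hPw2'
            exact absurd hPw2' (by simp)
          have hAx : L.idxOf x.1 + k*k + 1 ≤ N := by
            by_cases hBx : N ≤ L.idxOf x.1 + k*k
            · exfalso; omega
            · omega
          have hF1 : ∀ l, φ l w₁.1 = F l := by
            intro l
            simp only [PL] at hPw
            rw [dif_neg hA1] at hPw
            exact congrFun (Sum.inr_injective hPw) l
          have hF2 : ∀ l, φ l w₂.1 = F l := by
            intro l
            simp only [PL] at hPw2'
            rw [dif_neg hA2] at hPw2'
            exact congrFun (Sum.inr_injective hPw2') l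
          have hidxeq : idx x.1 w₁.1 = idx x.1 w₂.1 := by
            apply hdginj
            funext l
            have e1 : (Ml l).link x.1 w₁.1 = some (linkOf m n (wl l x.1 w₁.1)) :=
              mkCM_link_of_lt ha1 hlt1
            have e2 : (Ml l).link x.1 w₂.1 = some (linkOf m n (wl l x.1 w₂.1)) :=
              mkCM_link_of_lt ha2 hlt2
            have g1 := hhom l x.1 w₁.1 _ e1
            have g2 := hhom l x.1 w₂.1 _ e2
            rw [hF1 l] at g1
            rw [hF2 l] at g2
            have g4 := Option.some_injective _ (g1.symm.trans g2)
            exact linkOf_injective g4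
          have hw1S : w₁.1 ∈ Sv x.1 :=
            Finset.mem_filter.mpr ⟨Finset.mem_univ _, ha1, hlt1⟩
          have hw2S : w₂.1 ∈ Sv x.1 :=
            Finset.mem_filter.mpr ⟨Finset.mem_univ _, ha2, hlt2⟩
          exact hidx x.1 (hupdeg x.1 hAx) w₁.1 hw1S w₂.1 hw2S hidxeq
  have h1 : acycChrom G ≤ K := Nat.sInf_le hacy
  have hbase : (2 * (m:ℝ) + (n:ℝ)) = ((p:ℕ):ℝ) := by rw [hpdef]; push_cast; ring
  have hzp : (k:ℝ) ^ ((2 + ⌈Real.logb (2 * m + n : ℝ) (Real.logb (2 * m + n : ℝ) (k : ℝ))⌉ : ℤ))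
      = (k:ℝ) ^ (R:ℕ) := by
    have hexp : (2 + ⌈Real.logb (2 * m + n : ℝ) (Real.logb (2 * m + n : ℝ) (k : ℝ))⌉ : ℤ)
        = ((R:ℕ) : ℤ) := by
      rw [hbase, ← htdef, ← hzcdef, hRdef]
      push_cast [hccdef, Int.toNat_of_nonneg hzc0]
      ring
    rw [hexp, zpow_natCast]
  rw [hzp]
  calc (acycChrom G : ℝ) ≤ (K : ℝ) := by exact_mod_cast h1
  _ = (k:ℝ)^2 + (k:ℝ)^(R:ℕ) := by rw [hKdef]; push_cast; ring
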